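/- Let f : G → H be a function between finite groups, let A be an abelian subgroup of H containing [G,G;f] = ⟨[x,y;f] : x,y ∈ G⟩, and let K ≤ Stab_G(f) = {a ∈ G : f^a = f} with gcd([G:K], |A|) = 1. Let m satisfy m·[G:K] ≡ 1 (mod |A|), and let {aᵢ} be a set of representatives for the left cosets of K in G. Then the distributed average f̿(x) = f(x)·(∏ᵢ [aᵢ, x; f])^m does not depend on the choice of subgroups K and A, the choice of m, or the choice of coset representatives: any two valid choices yield the same function G → H. -/

import Mathlib

/-- The conjugate of an arbitrary function `f : G → H` by `a ∈ G`:
`f^a(x) = f(a)⁻¹ f(ax)`. -/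
def fConj {G H : Type*} [Group G] [Group H] (f : G → H) (a : G) : G → H :=
  fun x => (f a)⁻¹ * f (a * x)

/-- The `f`-distributor of `x` and `y`: `[x, y; f] = f(y)⁻¹ f(x)⁻¹ f(xy)`. -/
def fDist {G H : Type*} [Group G] [Group H] (f : G → H) (x y : G) : H :=
  (f y)⁻¹ * (f x)⁻¹ * f (x * y)

open QuotientGroup Finset

section Transversal

variable {G : Type*} [Group G]

theorem rightRep_mem (K : Subgroup G) (g : G) :
    (Quotient.mk (rightRel K) g).out * g⁻¹ ∈ K := by
  have h : Quotient.mk (rightRel K) (Quotient.mk (rightRel K) g).out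
      = Quotient.mk (rightRel K) g := Quotient.out_eq _
  have h2 : g * (Quotient.mk (rightRel K) g).out⁻¹ ∈ K :=
    rightRel_apply.mp (Quotient.exact h)
  simpa [mul_inv_rev] using K.inv_mem h2

theorem rightRep_unique (K : Subgroup G) {g : G} {q : Quotient (rightRel K)}
    (h : q.out * g⁻¹ ∈ K) : q = Quotient.mk (rightRel K) g := by
  have h1 : Quotient.mk (rightRel K) g = Quotient.mk (rightRel K) q.out :=
    Quotient.sound (rightRel_apply.mpr h)
  rw [h1, Quotient.out_eq]

theorem rightRep_existsUnique (K : Subgroup G) (g : G) :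
    ∃! q : Quotient (rightRel K), q.out * g⁻¹ ∈ K :=
  ⟨Quotient.mk (rightRel K) g, rightRep_mem K g, fun _ hq => rightRep_unique K hq⟩

theorem exists_transversal [Finite G] (K : Subgroup G) :
    ∃ S : Finset G, ∀ g : G, ∃! s, s ∈ S ∧ s * g⁻¹ ∈ K := by
  classical
  letI : Fintype G := Fintype.ofFinite G
  letI : Fintype (Quotient (rightRel K)) := Fintype.ofFinite _
  refine ⟨(Finset.univ : Finset (Quotient (rightRel K))).image Quotient.out, fun g => ?_⟩
  refine ⟨(Quotient.mk (rightRel K) g).out,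
    ⟨Finset.mem_image_of_mem _ (Finset.mem_univ _), rightRep_mem K g⟩, ?_⟩
  rintro s ⟨hsmem, hs⟩
  obtain ⟨q, -, rfl⟩ := Finset.mem_image.mp hsmem
  rw [rightRep_unique K hs]

theorem prod_transversal_congr {M : Type*} [CommMonoid M] (K : Subgroup G)
    (c : G → M) (hc : ∀ s t : G, s * t⁻¹ ∈ K → c s = c t)
    (S T : Finset G)
    (hS : ∀ g : G, ∃! s, s ∈ S ∧ s * g⁻¹ ∈ K)
    (hT : ∀ g : G, ∃! t, t ∈ T ∧ t * g⁻¹ ∈ K) :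
    ∏ s ∈ S, c s = ∏ t ∈ T, c t := by
  classical
  have hinv : ∀ a b : G, a * b⁻¹ ∈ K → b * a⁻¹ ∈ K := fun a b h => by
    simpa [mul_inv_rev] using K.inv_mem h
  refine Finset.prod_nbij' (fun s => (hT s).choose) (fun t => (hS t).choose)
    (fun s _ => ((hT s).choose_spec.1).1) (fun t _ => ((hS t).choose_spec.1).1)
    ?_ ?_ ?_
  · intro s hs
    exact ((hS (hT s).choose).choose_spec.2 s ⟨hs, hinv _ _ ((hT s).choose_spec.1).2⟩).symm
  · intro t ht
    exact ((hT (hS t).choose).choose_spec.2 t ⟨ht, hinv _ _ ((hS t).choose_spec.1).2⟩).symm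
  · intro s _
    exact (hc _ _ ((hT s).choose_spec.1).2).symm

end Transversal

section Nested

variable {G : Type*} [Group G]

theorem prod_transversal_nested {M : Type*} [CommMonoid M] [Finite G]
    (K K' : Subgroup G) (hKK' : K ≤ K') (c : G → M)
    (hc : ∀ k ∈ K', ∀ g : G, c (k * g) = c g)
    (S T : Finset G)
    (hS : ∀ g : G, ∃! s, s ∈ S ∧ s * g⁻¹ ∈ K)
    (hT : ∀ g : G, ∃! t, t ∈ T ∧ t * g⁻¹ ∈ K') :
    ∏ s ∈ S, c s = (∏ t ∈ T, c t) ^ K.relIndex K' := by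
  classical
  letI : Fintype (Quotient (rightRel (K.subgroupOf K'))) := Fintype.ofFinite _
  set J := K.subgroupOf K' with hJ
  set rr : Quotient (rightRel J) → G := fun q => ((Quotient.out q : K') : G) with hrr
  have hrrK' : ∀ q, rr q ∈ K' := fun q => (Quotient.out q).2
  have hrrinj : Function.Injective rr := fun q₁ q₂ h =>
    Quotient.out_injective (Subtype.coe_injective h)
  -- key uniqueness at the level of the subquotient
  have key : ∀ u : G, (hu : u ∈ K') → ∃! q : Quotient (rightRel J), rr q * u⁻¹ ∈ K := by
    intro u hu
    obtain ⟨q, hq, hq'⟩ := rightRep_existsUnique J (⟨u, hu⟩ : K')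
    refine ⟨q, ?_, ?_⟩
    · have := Subgroup.mem_subgroupOf.mp hq
      simpa using this
    · intro q' hq''
      exact hq' q' (Subgroup.mem_subgroupOf.mpr (by simpa using hq''))
  set S₀ : Finset G :=
    ((Finset.univ : Finset (Quotient (rightRel J))) ×ˢ T).image
      (fun p => rr p.1 * p.2) with hS₀def
  -- S₀ is a transversal of K
  have hS₀ : ∀ g : G, ∃! s, s ∈ S₀ ∧ s * g⁻¹ ∈ K := by
    intro g
    obtain ⟨t, ⟨htT, htg⟩, htu⟩ := hT g
    obtain ⟨q, hqmem, hquniq⟩ := key (g * t⁻¹) (by simpa [mul_inv_rev] using K'.inv_mem htg)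
    have hqmem' : rr q * (t * g⁻¹) ∈ K := by simpa [mul_inv_rev] using hqmem
    refine ⟨rr q * t, ⟨Finset.mem_image.mpr ⟨(q, t),
      Finset.mem_product.mpr ⟨Finset.mem_univ _, htT⟩, rfl⟩, ?_⟩, ?_⟩
    · rw [mul_assoc]; exact hqmem'
    · rintro s ⟨hsmem, hsg⟩
      obtain ⟨⟨q', t'⟩, hpt, rfl⟩ := Finset.mem_image.mp hsmem
      have ht'T : t' ∈ T := (Finset.mem_product.mp hpt).2
      have h1 : rr q' * (t' * g⁻¹) ∈ K' := by
        rw [← mul_assoc]; exact hKK' hsg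
      have h2 : t' * g⁻¹ ∈ K' := by
        have := K'.mul_mem (K'.inv_mem (hrrK' q')) h1
        simpa [← mul_assoc] using this
      have ht'eq : t' = t := htu t' ⟨ht'T, h2⟩
      subst ht'eq
      have hq'eq : q' = q := by
        apply hquniq
        simpa [mul_inv_rev, mul_assoc] using hsg
      rw [hq'eq]
  -- compute the product over S₀
  have hinj : ∀ p₁ ∈ (Finset.univ : Finset (Quotient (rightRel J))) ×ˢ T,
      ∀ p₂ ∈ (Finset.univ : Finset (Quotient (rightRel J))) ×ˢ T,
      rr p₁.1 * p₁.2 = rr p₂.1 * p₂.2 → p₁ = p₂ := by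
    rintro ⟨q₁, t₁⟩ hp₁ ⟨q₂, t₂⟩ hp₂ heq
    have ht₁ : t₁ ∈ T := (Finset.mem_product.mp hp₁).2
    have ht₂ : t₂ ∈ T := (Finset.mem_product.mp hp₂).2
    have h2 : rr q₁ * (t₁ * t₂⁻¹) = rr q₂ := by
      rw [← mul_assoc, heq, mul_assoc, mul_inv_cancel, mul_one]
    have h3 : t₁ * t₂⁻¹ ∈ K' := by
      have : t₁ * t₂⁻¹ = (rr q₁)⁻¹ * rr q₂ := by rw [← h2]; group
      rw [this]; exact K'.mul_mem (K'.inv_mem (hrrK' q₁)) (hrrK' q₂)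
    have ht : t₁ = t₂ := (hT t₂).unique ⟨ht₁, h3⟩ ⟨ht₂, by simpa using K'.one_mem⟩
    subst ht
    have : rr q₁ = rr q₂ := by simpa using h2
    rw [hrrinj this]
  have hprod : ∏ s ∈ S₀, c s
      = (∏ t ∈ T, c t) ^ Fintype.card (Quotient (rightRel J)) := by
    rw [hS₀def, Finset.prod_image hinj, Finset.prod_product]
    have : ∀ q : Quotient (rightRel J), ∀ t ∈ T, c (rr q * t) = c t :=
      fun q t _ => hc (rr q) (hrrK' q) t
    calc ∏ q : Quotient (rightRel J), ∏ t ∈ T, c (rr q * t)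
        = ∏ _q : Quotient (rightRel J), ∏ t ∈ T, c t := by
          apply Finset.prod_congr rfl
          intro q _
          exact Finset.prod_congr rfl (this q)
      _ = (∏ t ∈ T, c t) ^ Fintype.card (Quotient (rightRel J)) := by
          rw [Finset.prod_const, Finset.card_univ]
  have hcard : Fintype.card (Quotient (rightRel J)) = K.relIndex K' := by
    rw [← Nat.card_eq_fintype_card]
    exact Nat.card_congr (quotientRightRelEquivQuotientLeftRel J)
  have hc' : ∀ s t : G, s * t⁻¹ ∈ K → c s = c t := by
    intro s t h
    have hst : s = (s * t⁻¹) * t := by group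
    rw [hst]
    exact hc _ (hKK' h) t
  rw [prod_transversal_congr K c hc' S S₀ hS hS₀, hprod, hcard]

end Nested

section Stab

variable {G H : Type*} [Group G] [Group H]

/-- The stabilizer of `f` under conjugation, as a subgroup (assuming `f 1 = 1`). -/
def stabSubgroup (f : G → H) (hf1 : f 1 = 1) : Subgroup G where
  carrier := {a | ∀ y, f (a * y) = f a * f y}
  one_mem' := fun y => by simp [hf1]
  mul_mem' := by
    intro a b ha hb y
    have h1 : f (a * b) = f a * f b := by simpa using ha b
    calc f (a * b * y) = f (a * (b * y)) := by rw [mul_assoc]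
      _ = f a * (f b * f y) := by rw [ha, hb]
      _ = f (a * b) * f y := by rw [h1, mul_assoc]
  inv_mem' := by
    intro a ha y
    have h1 : ∀ z, f (a⁻¹ * z) = (f a)⁻¹ * f z := by
      intro z
      have h := ha (a⁻¹ * z)
      rw [mul_inv_cancel_left] at h
      rw [h, inv_mul_cancel_left]
    have h2 : f a⁻¹ = (f a)⁻¹ := by simpa [hf1] using h1 1
    rw [h1, h2]

theorem mem_stabSubgroup {f : G → H} {hf1 : f 1 = 1} {a : G} :
    a ∈ stabSubgroup f hf1 ↔ ∀ y, f (a * y) = f a * f y := Iff.rfl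

end Stab

/-- The distributed average `f̿(x) = f(x) · (∏ᵢ [aᵢ, x; f])^m` does not depend
on the choices made: given abelian subgroups `A₁, A₂ ≤ H` containing all
distributors, subgroups `K₁, K₂ ≤ Stab_G(f)` with `gcd([G:Kⱼ], |Aⱼ|) = 1`,
numbers `mⱼ` with `mⱼ·[G:Kⱼ] ≡ 1 (mod |Aⱼ|)`, and finsets `Sⱼ` of coset
representatives for the cosets of `Kⱼ` in `G` (exactly one representative in
each coset of `Kⱼ`), both choices yield the same function `G → H`.
(Since all distributors lie in the abelian subgroup `Aⱼ`, the product of the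
distributors, here taken in a fixed enumeration, is well defined.) -/
theorem distributed_average_well_defined {G H : Type*} [Group G] [Group H]
    [Finite G] [Finite H] (f : G → H)
    (A₁ A₂ : Subgroup H)
    (hA₁comm : ∀ a ∈ A₁, ∀ b ∈ A₁, a * b = b * a)
    (hA₂comm : ∀ a ∈ A₂, ∀ b ∈ A₂, a * b = b * a)
    (hA₁dist : ∀ x y : G, fDist f x y ∈ A₁)
    (hA₂dist : ∀ x y : G, fDist f x y ∈ A₂)
    (K₁ K₂ : Subgroup G)
    (hK₁stab : ∀ k ∈ K₁, fConj f k = f)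
    (hK₂stab : ∀ k ∈ K₂, fConj f k = f)
    (hcop₁ : Nat.Coprime K₁.index (Nat.card A₁))
    (hcop₂ : Nat.Coprime K₂.index (Nat.card A₂))
    (m₁ m₂ : ℕ)
    (hm₁ : m₁ * K₁.index ≡ 1 [MOD Nat.card A₁])
    (hm₂ : m₂ * K₂.index ≡ 1 [MOD Nat.card A₂])
    (S₁ S₂ : Finset G)
    (hS₁ : ∀ g : G, ∃! s, s ∈ S₁ ∧ s * g⁻¹ ∈ K₁)
    (hS₂ : ∀ g : G, ∃! s, s ∈ S₂ ∧ s * g⁻¹ ∈ K₂) :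
    ∀ x : G,
      f x * ((S₁.toList.map (fun a => fDist f a x)).prod) ^ m₁ =
      f x * ((S₂.toList.map (fun a => fDist f a x)).prod) ^ m₂ := by
  classical
  intro x
  -- basic facts
  have hf1 : f 1 = 1 := by
    have h := congrFun (hK₁stab 1 K₁.one_mem) 1
    simp only [fConj, one_mul] at h
    simpa using h.symm
  have hst : ∀ (K : Subgroup G), (∀ k ∈ K, fConj f k = f) → K ≤ stabSubgroup f hf1 := by
    intro K hK k hk y
    have h := congrFun (hK k hk) y
    simp only [fConj] at h
    rw [← h, mul_inv_cancel_left]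
  set K' : Subgroup G := K₁ ⊔ K₂ with hK'def
  have hK'st : ∀ k ∈ K', ∀ y, f (k * y) = f k * f y :=
    fun k hk => (sup_le (hst K₁ hK₁stab) (hst K₂ hK₂stab)) hk
  -- the abelian subgroup in which all distributors live
  set A₀ : Subgroup H := A₁ ⊓ A₂ with hA₀def
  haveI hA₀c : IsMulCommutative A₀ :=
    ⟨⟨fun a b => Subtype.ext
      (hA₁comm a.1 (Subgroup.mem_inf.mp a.2).1 b.1 (Subgroup.mem_inf.mp b.2).1)⟩⟩
  letI : CommMonoid ↥A₀ := { (inferInstance : Monoid ↥A₀) with mul_comm := fun a b => hA₀c.is_comm.comm a b }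
  set c' : G → ↥A₀ := fun a =>
    ⟨fDist f a x, Subgroup.mem_inf.mpr ⟨hA₁dist a x, hA₂dist a x⟩⟩ with hc'def
  have hcK' : ∀ k ∈ K', ∀ a : G, c' (k * a) = c' a := by
    intro k hk a
    apply Subtype.ext
    show fDist f (k * a) x = fDist f a x
    simp only [fDist]
    rw [mul_assoc k a x, hK'st k hk (a * x), hK'st k hk a]
    simp [mul_inv_rev, mul_assoc]
  -- a transversal of K'
  obtain ⟨T, hT⟩ := exists_transversal K'
  have h₁ : ∏ s ∈ S₁, c' s = (∏ t ∈ T, c' t) ^ K₁.relIndex K' :=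
    prod_transversal_nested K₁ K' le_sup_left c' hcK' S₁ T hS₁ hT
  have h₂ : ∏ s ∈ S₂, c' s = (∏ t ∈ T, c' t) ^ K₂.relIndex K' :=
    prod_transversal_nested K₂ K' le_sup_right c' hcK' S₂ T hS₂ hT
  -- the arithmetic
  set N := Nat.card ↥A₀ with hNdef
  set P : ↥A₀ := ∏ t ∈ T, c' t with hPdef
  have hN₁ : N ∣ Nat.card A₁ := Subgroup.card_dvd_of_le inf_le_left
  have hN₂ : N ∣ Nat.card A₂ := Subgroup.card_dvd_of_le inf_le_right
  have he : ∀ (K : Subgroup G) (m : ℕ), K ≤ K' →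
      m * K.index ≡ 1 [MOD Nat.card A₀] →
      (K.relIndex K' * m) * K'.index ≡ 1 [MOD N] := by
    intro K m hle hm
    have hrw : (K.relIndex K' * m) * K'.index = m * K.index := by
      rw [← Subgroup.relIndex_mul_index hle]; ring
    rw [hrw]
    exact hm
  have he₁ : (K₁.relIndex K' * m₁) * K'.index ≡ 1 [MOD N] :=
    he K₁ m₁ le_sup_left (hm₁.of_dvd hN₁)
  have he₂ : (K₂.relIndex K' * m₂) * K'.index ≡ 1 [MOD N] :=
    he K₂ m₂ le_sup_right (hm₂.of_dvd hN₂)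
  have hcop' : Nat.Coprime K'.index N :=
    Nat.Coprime.coprime_dvd_left (Subgroup.index_dvd_of_le le_sup_left)
      (Nat.Coprime.coprime_dvd_right hN₁ hcop₁)
  have hmodN : K₁.relIndex K' * m₁ ≡ K₂.relIndex K' * m₂ [MOD N] :=
    Nat.ModEq.cancel_right_of_coprime hcop'.symm (he₁.trans he₂.symm)
  have hkey : (∏ s ∈ S₁, c' s) ^ m₁ = (∏ s ∈ S₂, c' s) ^ m₂ := by
    rw [h₁, h₂, ← pow_mul, ← pow_mul]
    exact pow_eq_pow_iff_modEq.mpr (hmodN.of_dvd (orderOf_dvd_natCard P))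
  -- translate back to lists in H
  have hlist : ∀ S : Finset G,
      (S.toList.map (fun a => fDist f a x)).prod = ((∏ s ∈ S, c' s : ↥A₀) : H) := by
    intro S
    calc (S.toList.map (fun a => fDist f a x)).prod
        = ((S.toList.map c').map A₀.subtype).prod := by rw [List.map_map]; rfl
      _ = A₀.subtype (S.toList.map c').prod := (map_list_prod A₀.subtype _).symm
      _ = ((∏ s ∈ S, c' s : ↥A₀) : H) := by rw [Finset.prod_map_toList]; rfl
  rw [hlist S₁, hlist S₂, ← SubmonoidClass.coe_pow, ← SubmonoidClass.coe_pow, hkey]
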